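/- Assume s < 0. Let W ⊆ V be such that (B₁ ∪ B₂) ∩ W ≠ ∅ and (B₃ ∪ C) ∩ W ≠ ∅. Then the affine dimension of P((B₃ ∪ C) ∩ W) is at most the affine dimension of P(W) minus one. -/

import Mathlib

open scoped RealInnerProductSpace

/-- The `i`-th column of `y = A - s·I`, where `A` is the real adjacency matrix of `G`,
viewed as a point of Euclidean space `ℝ^V`. -/
noncomputable def srgCol {V : Type*} [Fintype V] [DecidableEq V]
    (G : SimpleGraph V) [DecidableRel G.Adj] (s : ℝ) (i : V) : EuclideanSpace ℝ V :=
  (WithLp.equiv 2 (V → ℝ)).symm fun j => (G.adjMatrix ℝ - s • (1 : Matrix V V ℝ)) j i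


/-- The affine dimension of a point set: the finrank of the direction of its affine span. -/
noncomputable def adim {V : Type*} [Fintype V] (X : Set (EuclideanSpace ℝ V)) : ℕ :=
  Module.finrank ℝ (affineSpan ℝ X).direction


/-- `nN G i U` is the number of neighbours of `i` lying in `U`. -/
noncomputable def nN {V : Type*} (G : SimpleGraph V) (i : V) (U : Set V) : ℕ :=
  {j ∈ U | G.Adj i j}.ncard

open Classical in
/-- The separating linear functional `x ↦ ∑_{j∈B₁} x_j - ∑_{j∈B₂} x_j`. -/
noncomputable def sepFun {V : Type*} [Fintype V] (B₁ B₂ : Set V) :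
    EuclideanSpace ℝ V →ₗ[ℝ] ℝ where
  toFun x := ∑ j, ((if j ∈ B₁ then (1:ℝ) else 0) - (if j ∈ B₂ then 1 else 0)) * x j
  map_add' x y := by simp [mul_add, Finset.sum_add_distrib]
  map_smul' r x := by simp [Finset.mul_sum, mul_left_comm]

open Classical in
lemma sum_ind_adj {V : Type*} [Fintype V] (G : SimpleGraph V) [DecidableRel G.Adj]
    (i : V) (U : Set V) :
    ∑ j, (if j ∈ U then (1:ℝ) else 0) * (if G.Adj j i then 1 else 0) = nN G i U := by
  have h : ∀ j, (if j ∈ U then (1:ℝ) else 0) * (if G.Adj j i then 1 else 0)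
      = if j ∈ U ∧ G.Adj i j then 1 else 0 := by
    intro j
    by_cases h1 : j ∈ U <;> by_cases h2 : G.Adj i j <;> simp [h1, h2, G.adj_comm]
  rw [Finset.sum_congr rfl fun j _ => h j]
  simp [nN, Set.ncard_eq_toFinset_card', Set.toFinset_setOf, Finset.sum_boole]

open Classical in
lemma sep_col {V : Type*} [Fintype V] [DecidableEq V]
    (G : SimpleGraph V) [DecidableRel G.Adj] (s : ℝ) (B₁ B₂ : Set V) (i : V) :
    sepFun B₁ B₂ (srgCol G s i)
      = (nN G i B₁ : ℝ) - (nN G i B₂ : ℝ)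
        - s * ((if i ∈ B₁ then 1 else 0) - (if i ∈ B₂ then 1 else 0)) := by
  have happ : ∀ j, (srgCol G s i) j
      = (if G.Adj j i then (1:ℝ) else 0) - s * (if j = i then 1 else 0) := by
    intro j
    simp [srgCol, Matrix.sub_apply, Matrix.smul_apply, Matrix.one_apply,
      SimpleGraph.adjMatrix_apply, smul_eq_mul]
  show (∑ j, ((if j ∈ B₁ then (1:ℝ) else 0) - (if j ∈ B₂ then 1 else 0)) * (srgCol G s i) j) = _
  calc (∑ j, ((if j ∈ B₁ then (1:ℝ) else 0) - (if j ∈ B₂ then 1 else 0)) * (srgCol G s i) j)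
      = ∑ j, ((if j ∈ B₁ then (1:ℝ) else 0) * (if G.Adj j i then 1 else 0)
          - (if j ∈ B₂ then (1:ℝ) else 0) * (if G.Adj j i then 1 else 0)
          - s * (((if j ∈ B₁ then (1:ℝ) else 0) - (if j ∈ B₂ then 1 else 0))
              * (if j = i then 1 else 0))) := by
        refine Finset.sum_congr rfl fun j _ => ?_
        rw [happ j]; ring
    _ = (nN G i B₁ : ℝ) - (nN G i B₂ : ℝ)
        - s * ((if i ∈ B₁ then 1 else 0) - (if i ∈ B₂ then 1 else 0)) := by
        rw [Finset.sum_sub_distrib, Finset.sum_sub_distrib, sum_ind_adj, sum_ind_adj,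
          ← Finset.mul_sum]
        congr 2
        rw [Finset.sum_eq_single i]
        · simp
        · intro b _ hb; simp [hb]
        · intro h; exact absurd (Finset.mem_univ i) h

lemma nN_eq_zero {V : Type*} (G : SimpleGraph V) {i : V} {U : Set V}
    (h : ∀ j ∈ U, ¬G.Adj i j) : nN G i U = 0 := by
  have : {j ∈ U | G.Adj i j} = ∅ := by
    ext j
    simp only [Set.mem_setOf_eq, Set.mem_empty_iff_false, iff_false, not_and]
    exact h j
  simp [nN, this]

theorem stmt_11 {V : Type*} [Fintype V] [DecidableEq V]
    (G : SimpleGraph V) [DecidableRel G.Adj] (v k l m : ℕ)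
    (hG : G.IsSRGWith v k l m) (s : ℝ) (hs : s < 0)
    (B₁ B₂ B₃ C : Set V)
    (hcover : B₁ ∪ B₂ ∪ B₃ ∪ C = Set.univ)
    (hd₁₂ : Disjoint B₁ B₂) (hd₁₃ : Disjoint B₁ B₃) (hd₁C : Disjoint B₁ C)
    (hd₂₃ : Disjoint B₂ B₃) (hd₂C : Disjoint B₂ C) (hd₃C : Disjoint B₃ C)
    (hB₁₂ : ∀ i ∈ B₁, ∀ j ∈ B₂, ¬G.Adj i j)
    (hB₁₃ : ∀ i ∈ B₁, ∀ j ∈ B₃, ¬G.Adj i j)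
    (hB₂₃ : ∀ i ∈ B₂, ∀ j ∈ B₃, ¬G.Adj i j)
    (hC : ∀ i ∈ C, nN G i B₁ = nN G i B₂ ∧ nN G i B₂ = nN G i B₃)
    (W : Set V)
    (hW₁ : ((B₁ ∪ B₂) ∩ W).Nonempty) (hW₂ : ((B₃ ∪ C) ∩ W).Nonempty) :
    adim (srgCol G s '' ((B₃ ∪ C) ∩ W)) + 1 ≤ adim (srgCol G s '' W) := by
  classical
  set φ := sepFun (V := V) B₁ B₂ with hφ
  -- φ vanishes on columns indexed by B₃ ∪ C
  have hzero : ∀ i ∈ B₃ ∪ C, φ (srgCol G s i) = 0 := by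
    intro i hi
    rw [hφ, sep_col]
    rcases hi with hi | hi
    · have h1 : nN G i B₁ = 0 :=
        nN_eq_zero G fun j hj ha => hB₁₃ j hj i hi ha.symm
      have h2 : nN G i B₂ = 0 :=
        nN_eq_zero G fun j hj ha => hB₂₃ j hj i hi ha.symm
      have hi1 : i ∉ B₁ := fun h => hd₁₃.ne_of_mem h hi rfl
      have hi2 : i ∉ B₂ := fun h => hd₂₃.ne_of_mem h hi rfl
      simp [h1, h2, hi1, hi2]
    · have h12 := (hC i hi).1
      have hi1 : i ∉ B₁ := fun h => hd₁C.ne_of_mem h hi rfl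
      have hi2 : i ∉ B₂ := fun h => hd₂C.ne_of_mem h hi rfl
      simp [h12, hi1, hi2]
  -- φ is nonzero on columns indexed by B₁ ∪ B₂
  have hne : ∀ i ∈ B₁ ∪ B₂, φ (srgCol G s i) ≠ 0 := by
    intro i hi
    rw [hφ, sep_col]
    rcases hi with hi | hi
    · have h2 : nN G i B₂ = 0 := nN_eq_zero G fun j hj ha => hB₁₂ i hi j hj ha
      have hi2 : i ∉ B₂ := fun h => hd₁₂.ne_of_mem hi h rfl
      have hnn : (0:ℝ) ≤ (nN G i B₁ : ℝ) := Nat.cast_nonneg _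
      simp only [h2, hi, hi2, if_true, if_false, Nat.cast_zero]
      intro hcontra
      nlinarith
    · have h1 : nN G i B₁ = 0 := nN_eq_zero G fun j hj ha => hB₁₂ j hj i hi ha.symm
      have hi1 : i ∉ B₁ := fun h => hd₁₂.ne_of_mem h hi rfl
      have hnn : (0:ℝ) ≤ (nN G i B₂ : ℝ) := Nat.cast_nonneg _
      simp only [h1, hi, hi1, if_true, if_false, Nat.cast_zero]
      intro hcontra
      nlinarith
  set X : Set (EuclideanSpace ℝ V) := srgCol G s '' ((B₃ ∪ C) ∩ W) with hX
  set Y : Set (EuclideanSpace ℝ V) := srgCol G s '' W with hY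
  have hXY : X ⊆ Y := Set.image_mono Set.inter_subset_right
  have hDle : (affineSpan ℝ X).direction ≤ (affineSpan ℝ Y).direction :=
    AffineSubspace.direction_le (affineSpan_mono ℝ hXY)
  -- the direction of the span of X lies in ker φ
  have hker : (affineSpan ℝ X).direction ≤ LinearMap.ker φ := by
    rw [direction_affineSpan, vectorSpan_def]
    refine Submodule.span_le.2 ?_
    rintro x hx
    rcases Set.mem_vsub.1 hx with ⟨u, hu, w, hw, rfl⟩
    rcases hu with ⟨iu, hiu, rfl⟩
    rcases hw with ⟨iw, hiw, rfl⟩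
    have hu0 := hzero iu hiu.1
    have hw0 := hzero iw hiw.1
    simp only [SetLike.mem_coe, LinearMap.mem_ker, vsub_eq_sub, map_sub, hu0, hw0, sub_zero]
  -- pick points
  obtain ⟨p0, hp0⟩ := hW₂
  obtain ⟨q0, hq0⟩ := hW₁
  set p : EuclideanSpace ℝ V := srgCol G s p0 with hp
  set q : EuclideanSpace ℝ V := srgCol G s q0 with hq
  have hpX : p ∈ X := ⟨p0, hp0, rfl⟩
  have hpY : p ∈ Y := hXY hpX
  have hqY : q ∈ Y := ⟨q0, hq0.2, rfl⟩
  have hqp_mem : q - p ∈ (affineSpan ℝ Y).direction := by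
    rw [direction_affineSpan]
    exact vsub_mem_vectorSpan ℝ hqY hpY
  have hqp_not : q - p ∉ (affineSpan ℝ X).direction := by
    intro hmem
    have h0 : φ (q - p) = 0 := hker hmem
    rw [map_sub, hzero p0 hp0.1, sub_zero] at h0
    exact hne q0 hq0.1 h0
  have hlt : (affineSpan ℝ X).direction < (affineSpan ℝ Y).direction :=
    lt_of_le_of_ne hDle (fun h => hqp_not (h ▸ hqp_mem))
  have := Submodule.finrank_lt_finrank_of_lt hlt
  simpa [adim] using this
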